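/- Let a and b be nonzero polynomials in R with totalDegree a ≠ totalDegree b. If g ∈ R satisfies a * σ(g) + b * g = 0, then g = 0; that is, the homogeneous first-order difference equation has only the zero polynomial solution when the coefficient degrees differ. -/

import Mathlib

open MvPolynomial

noncomputable def Phi {τ : Type*} {F : Type*} [CommSemiring F] :
    MvPolynomial τ F →+* Polynomial (MvPolynomial τ F) :=
  eval₂Hom (Polynomial.C.comp MvPolynomial.C) (fun i => Polynomial.C (X i) * Polynomial.X)

lemma Phi_monomial {τ : Type*} {F : Type*} [CommSemiring F] (d : τ →₀ ℕ) (c : F) :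
    Phi (monomial d c) =
      Polynomial.C (monomial d c) * Polynomial.X ^ (d.sum fun _ e => e) := by
  classical
  rw [Phi, eval₂Hom_monomial]
  simp only [RingHom.coe_comp, Function.comp_apply]
  rw [Finsupp.prod, Finsupp.sum]
  simp only [mul_pow, ← Polynomial.C_pow]
  rw [Finset.prod_mul_distrib, ← map_prod, Finset.prod_pow_eq_pow_sum,
    MvPolynomial.monomial_eq, map_mul, Finsupp.prod]
  ring

lemma Phi_coeff {τ : Type*} {F : Type*} [CommSemiring F] (p : MvPolynomial τ F) (n : ℕ) :
    (Phi p).coeff n = homogeneousComponent n p := by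
  classical
  conv_lhs => rw [p.as_sum]
  conv_rhs => rw [p.as_sum]
  rw [map_sum, Polynomial.finset_sum_coeff, map_sum]
  refine Finset.sum_congr rfl fun d hd => ?_
  rw [Phi_monomial, Polynomial.coeff_C_mul, Polynomial.coeff_X_pow]
  ext e
  rw [coeff_homogeneousComponent]
  simp only [Finsupp.degree, Finsupp.sum, coeff_monomial, mul_ite, mul_one, mul_zero]
  by_cases h2 : d = e
  · subst h2
    by_cases h : n = ∑ x ∈ d.support, d x
    · simp [h]
      exact fun hne => (hne rfl).elim
    · simp [h, Ne.symm h]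
      exact fun he => (h he.symm).elim
  · by_cases h : n = ∑ x ∈ d.support, d x <;> simp [h, h2, coeff_monomial]

lemma homogeneousComponent_totalDegree_ne_zero {τ : Type*} {F : Type*} [CommSemiring F]
    {p : MvPolynomial τ F} (hp : p ≠ 0) :
    homogeneousComponent p.totalDegree p ≠ 0 := by
  classical
  obtain ⟨d, hd, hdeg⟩ := Finset.exists_mem_eq_sup p.support
    (MvPolynomial.support_nonempty.mpr hp) (fun d => d.sum fun _ e => e)
  intro h
  have := congrArg (coeff d) h
  rw [coeff_homogeneousComponent] at this
  rw [MvPolynomial.totalDegree, hdeg] at this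
  rw [if_pos] at this
  · exact (MvPolynomial.mem_support_iff.mp hd) this
  · simp [Finsupp.degree_apply, Finsupp.sum]


lemma natDegree_Phi {τ : Type*} {F : Type*} [CommSemiring F]
    {p : MvPolynomial τ F} (hp : p ≠ 0) :
    (Phi p).natDegree = p.totalDegree ∧ Phi p ≠ 0 := by
  have h1 : (Phi p).coeff p.totalDegree ≠ 0 := by
    rw [Phi_coeff]; exact homogeneousComponent_totalDegree_ne_zero hp
  have h2 : Phi p ≠ 0 := fun h => h1 (by simp [h])
  refine ⟨le_antisymm ?_ (Polynomial.le_natDegree_of_ne_zero h1), h2⟩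
  rw [Polynomial.natDegree_le_iff_coeff_eq_zero]
  intro n hn
  rw [Phi_coeff]
  exact homogeneousComponent_eq_zero _ p hn

lemma totalDegree_mul_eq {τ : Type*} {F : Type*} [CommRing F] [IsDomain F]
    {p q : MvPolynomial τ F} (hp : p ≠ 0) (hq : q ≠ 0) :
    (p * q).totalDegree = p.totalDegree + q.totalDegree := by
  obtain ⟨hdp, hp'⟩ := natDegree_Phi hp
  obtain ⟨hdq, hq'⟩ := natDegree_Phi hq
  obtain ⟨hdpq, _⟩ := natDegree_Phi (mul_ne_zero hp hq)
  rw [← hdpq, map_mul, Polynomial.natDegree_mul hp' hq', hdp, hdq]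

lemma totalDegree_aeval_le {τ : Type*} {F : Type*} [CommSemiring F]
    (f : τ → MvPolynomial τ F) (hf : ∀ i, (f i).totalDegree ≤ 1)
    (p : MvPolynomial τ F) :
    (aeval f p).totalDegree ≤ p.totalDegree := by
  classical
  conv_lhs => rw [p.as_sum]
  rw [map_sum]
  apply totalDegree_finsetSum_le
  intro d hd
  rw [aeval_monomial]
  refine (totalDegree_mul _ _).trans ?_
  have h1 : (algebraMap F (MvPolynomial τ F) (coeff d p)).totalDegree = 0 := by
    simp [algebraMap_eq]
  rw [h1, zero_add]
  refine (totalDegree_finset_prod _ _).trans ?_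
  calc ∑ i ∈ d.support, ((f i) ^ (d i)).totalDegree
      ≤ ∑ i ∈ d.support, d i := Finset.sum_le_sum fun i _ =>
        (totalDegree_pow _ _).trans (by simpa using Nat.mul_le_mul_left (d i) (hf i))
    _ ≤ p.totalDegree := le_totalDegree hd

theorem unequal_degrees_only_zero_solution
    {F : Type*} [Field F] (u v : F) (hu : u ≠ 0)
    (σ : MvPolynomial (Fin 2) F →ₐ[F] MvPolynomial (Fin 2) F)
    (hσα : σ (X 0) = X 1)
    (hσβ : σ (X 1) = u • X 0 + v • X 1)
    (a b : MvPolynomial (Fin 2) F) (ha : a ≠ 0) (hb : b ≠ 0)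
    (hdeg : a.totalDegree ≠ b.totalDegree)
    (g : MvPolynomial (Fin 2) F)
    (heq : a * σ g + b * g = 0) :
    g = 0 := by
  classical
  by_contra hg
  -- left inverse τ of σ
  set T : MvPolynomial (Fin 2) F →ₐ[F] MvPolynomial (Fin 2) F :=
    aeval ![u⁻¹ • (X 1 - v • X 0), X 0] with hT
  have hTS : ∀ p, T (σ p) = p := by
    have : T.comp σ = AlgHom.id F (MvPolynomial (Fin 2) F) := by
      apply MvPolynomial.algHom_ext
      intro i
      fin_cases i <;>
        [skip; skip] <;>
        simp only [Fin.zero_eta, Fin.mk_one, AlgHom.comp_apply, AlgHom.id_apply, hσα, hσβ,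
          map_add, map_smul, hT, aeval_X, Matrix.cons_val_zero, Matrix.cons_val_one,
          Matrix.head_cons]
      · rw [smul_smul, mul_inv_cancel₀ hu, one_smul]
        ring
    intro p
    exact congrArg (fun f => f p) (congrArg DFunLike.coe this)
  -- σ preserves total degree
  have hσ_le : ∀ p : MvPolynomial (Fin 2) F, (σ p).totalDegree ≤ p.totalDegree := by
    intro p
    have hσeq : σ = aeval (fun i : Fin 2 => σ (X i)) := by
      apply MvPolynomial.algHom_ext
      intro i
      simp
    rw [hσeq]
    apply totalDegree_aeval_le
    intro i
    fin_cases i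
    · simp only [Fin.zero_eta, hσα]; exact (totalDegree_X 1).le
    · simp only [Fin.mk_one, hσβ]
      refine (totalDegree_add _ _).trans ?_
      simp only [max_le_iff]
      constructor
      · exact (totalDegree_smul_le _ _).trans (totalDegree_X 0).le
      · exact (totalDegree_smul_le _ _).trans (totalDegree_X 1).le
  have hT_le : ∀ p : MvPolynomial (Fin 2) F, (T p).totalDegree ≤ p.totalDegree := by
    intro p
    apply totalDegree_aeval_le
    intro i
    fin_cases i
    · refine (totalDegree_smul_le _ _).trans ?_
      refine (totalDegree_sub _ _).trans ?_
      simp only [max_le_iff]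
      exact ⟨(totalDegree_X 1).le, (totalDegree_smul_le _ _).trans (totalDegree_X 0).le⟩
    · exact (totalDegree_X 0).le
  have hσdeg : (σ g).totalDegree = g.totalDegree := by
    refine le_antisymm (hσ_le g) ?_
    conv_lhs => rw [← hTS g]
    exact hT_le (σ g)
  have hσg : σ g ≠ 0 := fun h => hg (by rw [← hTS g, h, map_zero])
  have key : a * σ g = -(b * g) := by linear_combination heq
  have := congrArg totalDegree key
  rw [totalDegree_mul_eq ha hσg, totalDegree_neg, totalDegree_mul_eq hb hg, hσdeg] at this
  omega
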